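/- Let I be the incenter of triangle ABC with inradius r and circumradius R, and let G be the centroid, K = diag(S_A, S_B, S_C). Then I K Iᵀ = 2r² and 3 G K Iᵀ = 2Rr + 2r² (in normalized barycentric coordinates). -/

import Mathlib

open scoped RealInnerProductSpace

noncomputable section

abbrev Pt := EuclideanSpace ℝ (Fin 2)

/-- Signed area of triangle XYZ in the plane. -/
def sArea (X Y Z : Pt) : ℝ :=
  ((Y 0 - X 0) * (Z 1 - X 1) - (Z 0 - X 0) * (Y 1 - X 1)) / 2

/-- Conway symbol: `conwayA A B C = S_A = (b^2 + c^2 - a^2)/2`. -/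
def conwayA (X Y Z : Pt) : ℝ :=
  (dist Z X ^ 2 + dist X Y ^ 2 - dist Y Z ^ 2) / 2

/-- The bilinear form given by the metric matrix K = diag (S_A, S_B, S_C). -/
def Kf (A B C : Pt) (u v : Fin 3 → ℝ) : ℝ :=
  conwayA A B C * u 0 * v 0 + conwayA B C A * u 1 * v 1 + conwayA C A B * u 2 * v 2

/-- The point with (normalized) barycentric coordinates `u` w.r.t. A, B, C. -/
def bary (A B C : Pt) (u : Fin 3 → ℝ) : Pt :=
  u 0 • A + u 1 • B + u 2 • C

theorem stmt14 (A B C : Pt) (h : sArea A B C ≠ 0)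
    (a b c S p r R : ℝ) (ha : a = dist B C) (hb : b = dist C A) (hc : c = dist A B)
    (hS : S = |sArea A B C|) (hp : p = (a + b + c) / 2) (hr : r = S / p)
    (hR : R = a * b * c / (4 * S))
    (Ib : Fin 3 → ℝ) (hIb : Ib = ![a / (2 * p), b / (2 * p), c / (2 * p)]) :
    Kf A B C Ib Ib = 2 * r ^ 2 ∧
      Kf A B C ![1, 1, 1] Ib = 2 * R * r + 2 * r ^ 2 := by
  have dist2 : ∀ X Y : Pt, dist X Y ^ 2 = (X 0 - Y 0)^2 + (X 1 - Y 1)^2 := by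
    intro X Y
    rw [EuclideanSpace.dist_eq, Real.sq_sqrt (by positivity)]
    simp [Fin.sum_univ_two, Real.dist_eq, sq_abs]
  have ha2 : a ^ 2 = (B 0 - C 0)^2 + (B 1 - C 1)^2 := by rw [ha, dist2]
  have hb2 : b ^ 2 = (C 0 - A 0)^2 + (C 1 - A 1)^2 := by rw [hb, dist2]
  have hc2 : c ^ 2 = (A 0 - B 0)^2 + (A 1 - B 1)^2 := by rw [hc, dist2]
  have hS2 : S ^ 2 = sArea A B C ^ 2 := by rw [hS, sq_abs]
  have hkey : 16 * S ^ 2 = 2*a^2*b^2 + 2*b^2*c^2 + 2*c^2*a^2 - a^4 - b^4 - c^4 := by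
    rw [hS2]
    unfold sArea
    linear_combination (-(2*b^2 + 2*c^2 - a^2 - ((B 0 - C 0)^2 + (B 1 - C 1)^2))) * ha2 +
      (-(2*c^2 + 2*((B 0 - C 0)^2 + (B 1 - C 1)^2) - b^2 - ((C 0 - A 0)^2 + (C 1 - A 1)^2))) * hb2 +
      (-(2*((B 0 - C 0)^2 + (B 1 - C 1)^2) + 2*((C 0 - A 0)^2 + (C 1 - A 1)^2) - c^2 - ((A 0 - B 0)^2 + (A 1 - B 1)^2))) * hc2
  have hS0 : S ≠ 0 := by rw [hS]; exact abs_ne_zero.mpr h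
  have ha0 : 0 ≤ a := ha ▸ dist_nonneg
  have hb0 : 0 ≤ b := hb ▸ dist_nonneg
  have hc0 : 0 ≤ c := hc ▸ dist_nonneg
  have hsum : a + b + c ≠ 0 := by
    intro hz
    apply hS0
    have h16 : 16 * S ^ 2 = 0 := by
      rw [hkey]
      have hA : a = -(b + c) := by linarith
      rw [hA]; ring
    exact pow_eq_zero_iff (n := 2) (by norm_num) |>.mp (by linarith : S ^ 2 = 0)
  have hp0 : p ≠ 0 := by rw [hp]; intro hz; exact hsum (by linarith)
  have hca : conwayA A B C = (b^2 + c^2 - a^2)/2 := by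
    unfold conwayA; rw [← ha, ← hb, ← hc]
  have hcb : conwayA B C A = (c^2 + a^2 - b^2)/2 := by
    unfold conwayA; rw [← ha, ← hb, ← hc]
  have hcc : conwayA C A B = (a^2 + b^2 - c^2)/2 := by
    unfold conwayA; rw [← ha, ← hb, ← hc]
  have hp2 : a + b + c = 2 * p := by rw [hp]; ring
  subst hIb
  constructor
  · unfold Kf
    rw [hca, hcb, hcc, hr]
    simp only [Matrix.cons_val_zero, Matrix.cons_val_one, Matrix.head_cons,
      Matrix.cons_val_two, Matrix.tail_cons]
    field_simp
    linear_combination (-1) * hkey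
  · unfold Kf
    rw [hca, hcb, hcc]
    simp only [Matrix.cons_val_zero, Matrix.cons_val_one, Matrix.head_cons,
      Matrix.cons_val_two, Matrix.tail_cons]
    rw [show (2:ℝ) * R * r + 2 * r ^ 2 = a * b * c / (2 * p) + 2 * (S / p) ^ 2 by
      rw [hR, hr]; field_simp; ring]
    rw [hp]; rw [hp] at hp0
    field_simp
    linear_combination (-1) * hkey
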